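/- Suppose j : V → M is an elementary embedding with critical point κ and α < ((2^κ)⁺)^M. Let D be the ultrafilter on κ derived from j using α (D = {X ⊆ κ : α ∈ j(X)}) and let k : M_D → M be the canonical factor embedding k([f]_D) = j(f)(α). Then crit(k) > α. -/

import Mathlib

namespace PaperFormal

/-- the language of set theory: a single binary relation (membership). -/
inductive memRel : ℕ → Type
  | mem : memRel 2

def memLang : FirstOrder.Language :=
  ⟨fun _ => Empty, memRel⟩

/-- the universe `V` of sets, as a structure in the language of set theory. -/
noncomputable instance zfStructure : memLang.Structure ZFSet where
  funMap := fun f _ => Empty.elim f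
  RelMap := fun r v => match r with | .mem => v 0 ∈ v 1

/-- an inner model `M`, i.e. a subclass of `V` with the membership structure. -/
noncomputable def subStructure (M : ZFSet → Prop) :
    memLang.Structure { x : ZFSet // M x } where
  funMap := fun f _ => Empty.elim f
  RelMap := fun r v => match r with | .mem => (v 0).val ∈ (v 1).val

/-- `x` is a (von Neumann) ordinal: a transitive set of transitive sets. -/
def ZIsOrd (x : ZFSet) : Prop :=
  x.IsTransitive ∧ ∀ y ∈ x, ZFSet.IsTransitive y

open FirstOrder Language

/-- deeply embedded ∈-formulas with de Bruijn indexed variables -/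
inductive PF : Type
  | mem : ℕ → ℕ → PF
  | eq : ℕ → ℕ → PF
  | imp : PF → PF → PF
  | iff : PF → PF → PF
  | and : PF → PF → PF
  | or : PF → PF → PF
  | not : PF → PF
  | all : PF → PF
  | ex : PF → PF

@[simp] def consEnv {S : Type*} (a : S) (e : ℕ → S) : ℕ → S
  | 0 => a
  | n+1 => e n

section Sat
variable {S : Type u} [str : memLang.Structure S]

/-- satisfaction of a `PF` in a `memLang`-structure, under an environment. -/
@[simp] def PF.Sat : PF → (ℕ → S) → Prop
  | .mem i i', e => Structure.RelMap (L := memLang) (M := S) memRel.mem ![e i, e i']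
  | .eq i i', e => e i = e i'
  | .imp φ ψ, e => φ.Sat e → ψ.Sat e
  | .iff φ ψ, e => (φ.Sat e ↔ ψ.Sat e)
  | .and φ ψ, e => φ.Sat e ∧ ψ.Sat e
  | .or φ ψ, e => φ.Sat e ∨ ψ.Sat e
  | .not φ, e => ¬ φ.Sat e
  | .all φ, e => ∀ a : S, φ.Sat (consEnv a e)
  | .ex φ, e => ∃ a : S, φ.Sat (consEnv a e)

end Sat

@[simp] lemma relMap_zf (v : Fin 2 → ZFSet) :
    Structure.RelMap (L := memLang) (M := ZFSet) memRel.mem v ↔ v 0 ∈ v 1 := Iff.rfl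

@[simp] lemma relMap_sub {M : ZFSet → Prop} (v : Fin 2 → {x : ZFSet // M x}) :
    @Structure.RelMap memLang _ (subStructure M) 2 memRel.mem v ↔ (v 0).val ∈ (v 1).val := Iff.rfl

/-- lift an assignment under a binder -/
def liftρ {m n : ℕ} (ρ : ℕ → Fin m ⊕ Fin n) : ℕ → Fin m ⊕ Fin (n+1)
  | 0 => Sum.inr (Fin.last n)
  | k+1 => Sum.map id Fin.castSucc (ρ k)

/-- compile a `PF` to a mathlib `BoundedFormula` -/
def PF.toBF {m : ℕ} : PF → {n : ℕ} → (ℕ → Fin m ⊕ Fin n) → memLang.BoundedFormula (Fin m) n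
  | .mem i i', _, ρ => Relations.boundedFormula₂ memRel.mem (Term.var (ρ i)) (Term.var (ρ i'))
  | .eq i i', _, ρ => Term.bdEqual (Term.var (ρ i)) (Term.var (ρ i'))
  | .imp φ ψ, _, ρ => (φ.toBF ρ).imp (ψ.toBF ρ)
  | .iff φ ψ, _, ρ => (φ.toBF ρ).iff (ψ.toBF ρ)
  | .and φ ψ, _, ρ => (φ.toBF ρ) ⊓ (ψ.toBF ρ)
  | .or φ ψ, _, ρ => (φ.toBF ρ) ⊔ (ψ.toBF ρ)
  | .not φ, _, ρ => (φ.toBF ρ).not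
  | .all φ, _, ρ => (φ.toBF (liftρ ρ)).all
  | .ex φ, _, ρ => (φ.toBF (liftρ ρ)).ex

theorem realize_toBF {S : Type u} [str : memLang.Structure S] :
    ∀ (φ : PF) {m n : ℕ} (ρ : ℕ → Fin m ⊕ Fin n) (v : Fin m → S) (xs : Fin n → S),
      (φ.toBF ρ).Realize v xs ↔ φ.Sat (fun k => Sum.elim v xs (ρ k)) := by
  intro φ
  induction φ with
  | mem i i' => intro m n ρ v xs; simp [PF.toBF, BoundedFormula.realize_rel₂]; exact BoundedFormula.realize_rel₂
  | eq i i' => intro m n ρ v xs; simp [PF.toBF, BoundedFormula.realize_bdEqual]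
  | imp φ ψ ih₁ ih₂ => intro m n ρ v xs; simp [PF.toBF, BoundedFormula.realize_imp, ih₁, ih₂]
  | iff φ ψ ih₁ ih₂ => intro m n ρ v xs; simp [PF.toBF, BoundedFormula.realize_iff, ih₁, ih₂]
  | and φ ψ ih₁ ih₂ => intro m n ρ v xs; simp [PF.toBF, BoundedFormula.realize_inf, ih₁, ih₂]
  | or φ ψ ih₁ ih₂ => intro m n ρ v xs; simp [PF.toBF, BoundedFormula.realize_sup, ih₁, ih₂]
  | not φ ih => intro m n ρ v xs; simp [PF.toBF, BoundedFormula.realize_not, ih]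
  | all φ ih =>
    intro m n ρ v xs
    simp only [PF.toBF, BoundedFormula.realize_all, ih]
    apply forall_congr'
    intro a
    apply iff_of_eq; congr 1
    funext k
    cases k with
    | zero => simp [liftρ]
    | succ k =>
      simp only [liftρ, consEnv]
      cases ρ k with
      | inl i => simp
      | inr i => simp
  | ex φ ih =>
    intro m n ρ v xs
    simp only [PF.toBF, BoundedFormula.realize_ex, ih]
    apply exists_congr
    intro a
    apply iff_of_eq; congr 1
    funext k
    cases k with
    | zero => simp [liftρ]
    | succ k =>
      simp only [liftρ, consEnv]
      cases ρ k with
      | inl i => simp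
      | inr i => simp


/-- number of (intended) free variables of a PF -/
@[simp] def PF.bound : PF → ℕ
  | .mem i i' => max i i' + 1
  | .eq i i' => max i i' + 1
  | .imp φ ψ => max φ.bound ψ.bound
  | .iff φ ψ => max φ.bound ψ.bound
  | .and φ ψ => max φ.bound ψ.bound
  | .or φ ψ => max φ.bound ψ.bound
  | .not φ => φ.bound
  | .all φ => φ.bound - 1
  | .ex φ => φ.bound - 1

theorem PF.sat_congr {S : Type u} [str : memLang.Structure S] :
    ∀ (φ : PF) (e e' : ℕ → S), (∀ k < φ.bound, e k = e' k) → (φ.Sat e ↔ φ.Sat e') := by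
  intro φ
  induction φ with
  | mem i i' => intro e e' h; simp only [PF.Sat]; rw [h i, h i'] <;> simp [Nat.lt_succ_iff]
  | eq i i' => intro e e' h; simp only [PF.Sat]; rw [h i, h i'] <;> simp [Nat.lt_succ_iff]
  | imp φ ψ ih₁ ih₂ => intro e e' h; simp only [PF.Sat];
                       rw [ih₁ e e' fun k hk => h k (by simp at *; omega),
                           ih₂ e e' fun k hk => h k (by simp at *; omega)]
  | iff φ ψ ih₁ ih₂ => intro e e' h; simp only [PF.Sat];
                       rw [ih₁ e e' fun k hk => h k (by simp at *; omega),
                           ih₂ e e' fun k hk => h k (by simp at *; omega)]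
  | and φ ψ ih₁ ih₂ => intro e e' h; simp only [PF.Sat];
                       rw [ih₁ e e' fun k hk => h k (by simp at *; omega),
                           ih₂ e e' fun k hk => h k (by simp at *; omega)]
  | or φ ψ ih₁ ih₂ => intro e e' h; simp only [PF.Sat];
                      rw [ih₁ e e' fun k hk => h k (by simp at *; omega),
                          ih₂ e e' fun k hk => h k (by simp at *; omega)]
  | not φ ih => intro e e' h; simp only [PF.Sat]; rw [ih e e' fun k hk => h k (by simpa using hk)]
  | all φ ih =>
    intro e e' h; simp only [PF.Sat]
    refine forall_congr' fun a => ih _ _ fun k hk => ?_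
    cases k with
    | zero => rfl
    | succ k => simp only [consEnv]; exact h k (by simp at *; omega)
  | ex φ ih =>
    intro e e' h; simp only [PF.Sat]
    refine exists_congr fun a => ih _ _ fun k hk => ?_
    cases k with
    | zero => rfl
    | succ k => simp only [consEnv]; exact h k (by simp at *; omega)

/-- relativized satisfaction: quantifiers range over `M` only, membership is real. -/
@[simp] def PF.SatR (M : ZFSet → Prop) : PF → (ℕ → ZFSet) → Prop
  | .mem i i', e => e i ∈ e i'
  | .eq i i', e => e i = e i'
  | .imp φ ψ, e => φ.SatR M e → ψ.SatR M e
  | .iff φ ψ, e => (φ.SatR M e ↔ ψ.SatR M e)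
  | .and φ ψ, e => φ.SatR M e ∧ ψ.SatR M e
  | .or φ ψ, e => φ.SatR M e ∨ ψ.SatR M e
  | .not φ, e => ¬ φ.SatR M e
  | .all φ, e => ∀ a : ZFSet, M a → φ.SatR M (consEnv a e)
  | .ex φ, e => ∃ a : ZFSet, M a ∧ φ.SatR M (consEnv a e)

theorem consEnv_val {M : ZFSet → Prop} (a : {x : ZFSet // M x}) (e : ℕ → {x : ZFSet // M x}) :
    (fun k => (consEnv a e k).val) = consEnv a.val (fun k => (e k).val) := by
  funext k; cases k <;> rfl

theorem PF.satM_iff_satR (M : ZFSet → Prop) :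
    ∀ (φ : PF) (e : ℕ → {x : ZFSet // M x}),
      (PF.Sat (str := subStructure M) φ e ↔ φ.SatR M fun k => (e k).val) := by
  intro φ
  induction φ with
  | mem i i' => intro e; rfl
  | eq i i' => intro e; simp only [PF.Sat, PF.SatR]; exact ⟨fun h => by rw [h], Subtype.ext⟩
  | imp φ ψ ih₁ ih₂ => intro e; simp only [PF.Sat, PF.SatR, ih₁, ih₂]
  | iff φ ψ ih₁ ih₂ => intro e; simp only [PF.Sat, PF.SatR, ih₁, ih₂]
  | and φ ψ ih₁ ih₂ => intro e; simp only [PF.Sat, PF.SatR, ih₁, ih₂]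
  | or φ ψ ih₁ ih₂ => intro e; simp only [PF.Sat, PF.SatR, ih₁, ih₂]
  | not φ ih => intro e; simp only [PF.Sat, PF.SatR, ih]
  | all φ ih =>
    intro e; simp only [PF.Sat, PF.SatR]
    constructor
    · intro h a ha
      have := (ih (consEnv ⟨a, ha⟩ e)).1 (h ⟨a, ha⟩)
      rwa [consEnv_val] at this
    · intro h a
      refine (ih (consEnv a e)).2 ?_
      rw [consEnv_val]
      exact h a.val a.2
  | ex φ ih =>
    intro e; simp only [PF.Sat, PF.SatR]
    constructor
    · rintro ⟨a, ha⟩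
      have := (ih (consEnv a e)).1 ha
      rw [consEnv_val] at this
      exact ⟨a.val, a.2, this⟩
    · rintro ⟨a, haM, ha⟩
      refine ⟨⟨a, haM⟩, (ih _).2 ?_⟩
      rwa [consEnv_val]


theorem transferPF (M : ZFSet → Prop) (j : ZFSet → ZFSet) (hjM : ∀ x, M (j x))
    (helem : ∀ (n : ℕ) (φ : memLang.Formula (Fin n)) (v : Fin n → ZFSet),
      φ.Realize v ↔
        @FirstOrder.Language.Formula.Realize memLang { x : ZFSet // M x }
          (subStructure M) (Fin n) φ (fun i => ⟨j (v i), hjM (v i)⟩))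
    (φ : PF) (e : ℕ → ZFSet) :
    φ.Sat e ↔ φ.SatR M fun k => j (e k) := by
  letI strM := subStructure M
  have h := helem (φ.bound + 1)
    (PF.toBF φ (fun k => Sum.inl ⟨min k φ.bound, by omega⟩)) (fun i => e i.val)
  rw [Formula.Realize, Formula.Realize, realize_toBF, realize_toBF] at h
  have hV : φ.Sat e ↔ φ.Sat (fun k =>
      Sum.elim (fun i : Fin (φ.bound + 1) => e i.val) (default : Fin 0 → ZFSet)
        (Sum.inl (⟨min k φ.bound, by omega⟩ : Fin (φ.bound + 1)))) := by
    apply PF.sat_congr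
    intro k hk
    simp only [Sum.elim_inl]
    congr 1
    omega
  have hM : PF.Sat (str := strM) φ (fun k =>
      Sum.elim (fun i : Fin (φ.bound + 1) =>
        (⟨j (e i.val), hjM _⟩ : {x : ZFSet // M x})) (default : Fin 0 → {x : ZFSet // M x})
        (Sum.inl (⟨min k φ.bound, by omega⟩ : Fin (φ.bound + 1)))) ↔
      PF.Sat (str := strM) φ (fun k => (⟨j (e k), hjM _⟩ : {x : ZFSet // M x})) := by
    apply PF.sat_congr
    intro k hk
    simp only [Sum.elim_inl]
    apply Subtype.ext
    simp only
    congr 2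
    omega
  exact hV.trans (h.trans (hM.trans (PF.satM_iff_satR M φ _)))


/-! ### pair membership formula -/

/-- `z = e (x)` as characterization of singleton: `∀ c, c ∈ u ↔ c = x` (indices at current depth) -/
def singPF (u x : ℕ) : PF := PF.all (PF.iff (PF.mem 0 (u+1)) (PF.eq 0 (x+1)))

def pr2PF (u x y : ℕ) : PF :=
  PF.all (PF.iff (PF.mem 0 (u+1)) (PF.or (PF.eq 0 (x+1)) (PF.eq 0 (y+1))))

/-- formula expressing `pair (e i) (e j) ∈ e F` (Kuratowski) -/
def pmem (i j F : ℕ) : PF :=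
  PF.ex (PF.and (PF.mem 0 (F+1))
    (PF.and (PF.ex (PF.and (PF.mem 0 1) (singPF 0 (i+2))))
      (PF.and (PF.ex (PF.and (PF.mem 0 1) (pr2PF 0 (i+2) (j+2))))
        (PF.all (PF.imp (PF.mem 0 1) (PF.or (singPF 0 (i+2)) (pr2PF 0 (i+2) (j+2))))))))

lemma mem_zpair {x y z : ZFSet} : z ∈ ZFSet.pair x y ↔ z = {x} ∨ z = ({x, y} : ZFSet) := by
  simp [ZFSet.pair, ZFSet.mem_pair]

theorem satV_pmem (i j F : ℕ) (e : ℕ → ZFSet) :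
    (pmem i j F).Sat e ↔ ZFSet.pair (e i) (e j) ∈ e F := by
  simp only [pmem, singPF, pr2PF, PF.Sat, consEnv, relMap_zf, Matrix.cons_val_zero,
    Matrix.cons_val_one, Matrix.head_cons]
  constructor
  · rintro ⟨s, hsF, ⟨u1, hu1s, hu1⟩, ⟨u2, hu2s, hu2⟩, hall⟩
    have h1 : u1 = ({e i} : ZFSet) := ZFSet.ext fun c => by
      rw [hu1 c, ZFSet.mem_singleton]
    have h2 : u2 = ({e i, e j} : ZFSet) := ZFSet.ext fun c => by
      rw [hu2 c, ZFSet.mem_pair]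
    have hs : s = ZFSet.pair (e i) (e j) := ZFSet.ext fun b => by
      rw [mem_zpair]
      constructor
      · intro hb
        rcases hall b hb with h | h
        · exact Or.inl (ZFSet.ext fun c => by rw [h c, ZFSet.mem_singleton])
        · exact Or.inr (ZFSet.ext fun c => by rw [h c, ZFSet.mem_pair])
      · rintro (rfl | rfl)
        · rwa [← h1]
        · rwa [← h2]
    rwa [hs] at hsF
  · intro hp
    refine ⟨ZFSet.pair (e i) (e j), hp,
      ⟨{e i}, ?_, fun c => by simp⟩, ⟨{e i, e j}, ?_, fun c => by simp [ZFSet.mem_pair]⟩, ?_⟩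
    · rw [mem_zpair]; left; rfl
    · rw [mem_zpair]; right; rfl
    · intro u hu
      rcases mem_zpair.1 hu with rfl | rfl
      · exact Or.inl fun c => by simp
      · exact Or.inr fun c => by simp [ZFSet.mem_pair]

theorem satR_pmem (M : ZFSet → Prop) (htrans : ∀ x, M x → ∀ y ∈ x, M y)
    (i j F : ℕ) (e : ℕ → ZFSet) (hi : M (e i)) (hj : M (e j)) (hF : M (e F)) :
    (pmem i j F).SatR M e ↔ ZFSet.pair (e i) (e j) ∈ e F := by
  simp only [pmem, singPF, pr2PF, PF.SatR, consEnv]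
  constructor
  · rintro ⟨s, hsM, hsF, ⟨u1, hu1M, hu1s, hu1⟩, ⟨u2, hu2M, hu2s, hu2⟩, hall⟩
    have h1 : u1 = ({e i} : ZFSet) := ZFSet.ext fun c => by
      rw [ZFSet.mem_singleton]
      constructor
      · intro hc; exact (hu1 c (htrans _ hu1M _ hc)).1 hc
      · rintro rfl; exact (hu1 _ hi).2 rfl
    have h2 : u2 = ({e i, e j} : ZFSet) := ZFSet.ext fun c => by
      rw [ZFSet.mem_pair]
      constructor
      · intro hc; exact (hu2 c (htrans _ hu2M _ hc)).1 hc
      · rintro (rfl | rfl)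
        · exact (hu2 _ hi).2 (Or.inl rfl)
        · exact (hu2 _ hj).2 (Or.inr rfl)
    have hs : s = ZFSet.pair (e i) (e j) := ZFSet.ext fun b => by
      rw [mem_zpair]
      constructor
      · intro hb
        have hbM : M b := htrans _ hsM _ hb
        rcases hall b hbM hb with h | h
        · refine Or.inl (ZFSet.ext fun c => ?_)
          rw [ZFSet.mem_singleton]
          constructor
          · intro hc; exact (h c (htrans _ hbM _ hc)).1 hc
          · rintro rfl; exact (h _ hi).2 rfl
        · refine Or.inr (ZFSet.ext fun c => ?_)
          rw [ZFSet.mem_pair]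
          constructor
          · intro hc; exact (h c (htrans _ hbM _ hc)).1 hc
          · rintro (rfl | rfl)
            · exact (h _ hi).2 (Or.inl rfl)
            · exact (h _ hj).2 (Or.inr rfl)
      · rintro (rfl | rfl)
        · rwa [← h1]
        · rwa [← h2]
    rwa [hs] at hsF
  · intro hp
    have hpM : M (ZFSet.pair (e i) (e j)) := htrans _ hF _ hp
    have h1M : M ({e i} : ZFSet) := htrans _ hpM _ (mem_zpair.2 (Or.inl rfl))
    have h2M : M ({e i, e j} : ZFSet) := htrans _ hpM _ (mem_zpair.2 (Or.inr rfl))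
    refine ⟨ZFSet.pair (e i) (e j), hpM, hp,
      ⟨{e i}, h1M, mem_zpair.2 (Or.inl rfl), fun c _ => by simp⟩,
      ⟨{e i, e j}, h2M, mem_zpair.2 (Or.inr rfl), fun c _ => by simp [ZFSet.mem_pair]⟩, ?_⟩
    intro u _ hu
    rcases mem_zpair.1 hu with rfl | rfl
    · exact Or.inl fun c _ => by simp
    · exact Or.inr fun c _ => by simp [ZFSet.mem_pair]


attribute [irreducible] pmem

/-! ### von Neumann ordinal facts -/

lemma ZIsOrd.mem {x y : ZFSet} (h : ZIsOrd x) (hy : y ∈ x) : ZIsOrd y :=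
  ⟨h.2 y hy, fun z hz => h.2 z (h.1 y hy hz)⟩

theorem ZIsOrd.tri : ∀ x : ZFSet, ZIsOrd x → ∀ y : ZFSet, ZIsOrd y →
    x ∈ y ∨ x = y ∨ y ∈ x := by
  intro x
  induction x using ZFSet.inductionOn with
  | _ x ihx =>
    intro hx y
    induction y using ZFSet.inductionOn with
    | _ y ihy =>
      intro hy
      by_cases hxy : x ∈ y
      · exact Or.inl hxy
      by_cases hyx : y ∈ x
      · exact Or.inr (Or.inr hyx)
      refine Or.inr (Or.inl (ZFSet.ext fun z => ?_))
      constructor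
      · intro hz
        rcases ihx z hz (hx.mem hz) y hy with h | h | h
        · exact h
        · exact absurd (h ▸ hz) hyx
        · exact absurd (hx.1 z hz h) hyx
      · intro hz
        rcases ihy z hz (hy.mem hz) with h | h | h
        · exact absurd (hy.1 z hz h) hxy
        · exact absurd (h.symm ▸ hz) hxy
        · exact h


/-! ### derived formulas -/

def subPF (i j : ℕ) : PF := PF.all (PF.imp (PF.mem 0 (i+1)) (PF.mem 0 (j+1)))

def funclPF (F : ℕ) : PF :=
  PF.all (PF.all (PF.all (PF.imp (pmem 2 1 (F+3)) (PF.imp (pmem 2 0 (F+3)) (PF.eq 1 0)))))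

def ordPF (d : ℕ) : PF :=
  PF.all (PF.imp (PF.mem 0 (d+1))
    (PF.and (subPF 0 (d+1)) (PF.all (PF.imp (PF.mem 0 1) (subPF 0 1)))))

def surjPF (S d ξ : ℕ) : PF :=
  PF.all (PF.imp (PF.or (PF.mem 0 (ξ+1)) (PF.eq 0 (ξ+1)))
    (PF.ex (PF.and (subPF 0 (d+2)) (pmem 0 1 (S+2)))))

def sePF (d ξ : ℕ) : PF := PF.ex (PF.and (funclPF 0) (surjPF 0 (d+1) (ξ+1)))

/-- free: 0 = κ, 1 = G, 2 = G₃ -/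
def theta1 : PF :=
  PF.and (funclPF 1) (PF.and (funclPF 2)
    (PF.all (PF.imp (PF.mem 0 1)
      (PF.ex (PF.ex (PF.and (pmem 2 1 4) (PF.and (ordPF 1)
        (PF.and (PF.all (PF.imp (PF.mem 0 2) (PF.not (sePF 0 3))))
          (PF.and (pmem 2 0 5) (PF.and (funclPF 0) (surjPF 0 1 2)))))))))))

/-- free: 0 = X, 1 = κ, 2 = δ, 3 = S₁, 4 = u -/
def phiX : PF :=
  PF.all (PF.iff (PF.mem 0 1) (PF.and (PF.mem 0 2)
    (PF.all (PF.imp (PF.mem 0 4)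
      (PF.all (PF.imp (pmem 1 0 6) (PF.iff (PF.mem 2 0) (PF.mem 1 7))))))))

/-- free: 0 = X, 1 = γ₀ -/
def phiSingle : PF := PF.all (PF.iff (PF.mem 0 1) (PF.eq 0 2))

/-- free: 0 = X -/
def phiNotMem : PF := PF.all (PF.not (PF.mem 0 1))

/-- free: 0 = κ, 1 = β, 2 = f -/
def phiConst : PF := PF.all (PF.imp (PF.mem 0 1) (pmem 0 2 3))

/-- free: 0 = κ, 1 = G, 2 = G₃, 3 = Fy, 4 = B, 5 = Y -/
def theta2 : PF :=
  PF.all (PF.imp (PF.mem 0 1) (PF.ex (PF.ex (PF.ex (PF.ex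
    (PF.and (pmem 4 3 6) (PF.and (pmem 4 2 7) (PF.and (pmem 4 1 8)
      (PF.and (PF.all (PF.iff (PF.mem 0 2) (PF.and (PF.mem 0 11) (PF.mem 0 4))))
        (PF.and (pmem 4 0 9)
          (PF.imp
            (PF.ex (PF.and (pmem 2 0 3) (PF.all (PF.imp (pmem 3 0 4) (PF.eq 0 1)))))
            (pmem 1 0 2))))))))))))

/-! ### semantic helpers -/

/-- `S` is a functional relation (as a set of Kuratowski pairs). -/
def IsFuncl (S : ZFSet) : Prop :=
  ∀ q w w' : ZFSet, ZFSet.pair q w ∈ S → ZFSet.pair q w' ∈ S → w = w'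

/-- there is a functional relation whose values on `{q : q ⊆ d}` cover `ξ + 1`. -/
def SEv (d ξ : ZFSet) : Prop :=
  ∃ S : ZFSet, IsFuncl S ∧ ∀ w : ZFSet, (w ∈ ξ ∨ w = ξ) →
    ∃ q : ZFSet, q ⊆ d ∧ ZFSet.pair q w ∈ S

lemma jcomp_cons (j : ZFSet → ZFSet) (a : ZFSet) (e : ℕ → ZFSet) :
    (fun k => j (consEnv a e k)) = consEnv (j a) (fun k => j (e k)) :=
  funext fun k => by cases k <;> rfl

lemma pairmem_M {M : ZFSet → Prop} (htrans : ∀ x, M x → ∀ y ∈ x, M y)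
    {S a b : ZFSet} (hS : M S) (h : ZFSet.pair a b ∈ S) : M a ∧ M b := by
  have hp : M (ZFSet.pair a b) := htrans _ hS _ h
  have h2 : M ({a, b} : ZFSet) := htrans _ hp _ (mem_zpair.2 (Or.inr rfl))
  exact ⟨htrans _ h2 _ (ZFSet.mem_pair.2 (Or.inl rfl)),
    htrans _ h2 _ (ZFSet.mem_pair.2 (Or.inr rfl))⟩

noncomputable local instance (priority := low) zfdef {n : ℕ} {F : (Fin n → ZFSet) → ZFSet} :
    ZFSet.Definable n F := Classical.allZFSetDefinable F

lemma isFuncl_map (f : ZFSet → ZFSet) (x : ZFSet) : IsFuncl (ZFSet.map f x) := by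
  intro q w w' h1 h2
  obtain ⟨z, hz, he⟩ := ZFSet.mem_map.1 h1
  obtain ⟨rfl, rfl⟩ := ZFSet.pair_injective he
  obtain ⟨z', hz', he'⟩ := ZFSet.mem_map.1 h2
  obtain ⟨rfl, rfl⟩ := ZFSet.pair_injective he'
  rfl

theorem stmt15 (M : ZFSet → Prop)
    (htrans : ∀ x, M x → ∀ y ∈ x, M y)
    (j : ZFSet → ZFSet) (hjM : ∀ x, M (j x))
    -- `j` is elementary from `(V, ∈)` to `(M, ∈)`:
    (helem : ∀ (n : ℕ) (φ : memLang.Formula (Fin n)) (v : Fin n → ZFSet),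
      φ.Realize v ↔
        @FirstOrder.Language.Formula.Realize memLang { x : ZFSet // M x }
          (subStructure M) (Fin n) φ (fun i => ⟨j (v i), hjM (v i)⟩))
    -- `κ` is the critical point of `j`:
    (κ : ZFSet) (hκord : ZIsOrd κ)
    (hfix : ∀ β ∈ κ, j β = β) (hmove : j κ ≠ κ)
    -- `α` is an ordinal of `M` with `α < ((2^κ)⁺)^M`: `M` has a surjection from
    -- `P(κ)^M` onto `α + 1`:
    (α : ZFSet) (hαord : ZIsOrd α) (hαM : M α) (hα : α ∈ j κ)
    (pκ : ZFSet) (hpκM : M pκ) (hpκ : ∀ x, x ∈ pκ ↔ (M x ∧ x ⊆ κ))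
    (F : ZFSet) (hFM : M F) (hFfun : ZFSet.IsFunc pκ (insert α α) F)
    (hFsurj : ∀ β ∈ (insert α α : ZFSet), ∃ x ∈ pκ, ZFSet.pair x β ∈ F) :
    -- conclusion: `crit(k) > α`, i.e. `α + 1 ⊆ ran(k)`:
    ∀ β, (β ∈ α ∨ β = α) →
      ∃ f r : ZFSet, ZFSet.IsFunc κ r f ∧ ZFSet.pair α β ∈ j f := by
  intro β hβ
  have tr : ∀ (φ : PF) (e : ℕ → ZFSet), φ.Sat e ↔ φ.SatR M fun k => j (e k) :=
    transferPF M j hjM helem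
  have hMm : ∀ {a b : ZFSet}, M b → a ∈ b → M a := fun hb ha => htrans _ hb _ ha
  have memj : ∀ {z u : ZFSet}, z ∈ u ↔ j z ∈ j u := by
    intro z u
    have := tr (PF.mem 0 1) (consEnv z (consEnv u fun _ => ∅))
    simpa using this
  by_cases hcase : α ∈ κ
  · -- easy case : `α < κ`, use the constant function with value `β`
    have hβκ : β ∈ κ := by
      rcases hβ with h | h
      · exact hκord.1 α hcase h
      · exact h ▸ hcase
    set f : ZFSet := ZFSet.map (Function.const _ β) κ with hf
    have hV : (phiConst).Sat (consEnv κ (consEnv β (consEnv f fun _ => ∅))) := by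
      simp only [phiConst, PF.Sat, consEnv, satV_pmem, relMap_zf, Matrix.cons_val_zero,
        Matrix.cons_val_one, Matrix.head_cons]
      intro a ha
      rw [hf]
      exact ZFSet.mem_map.2 ⟨a, ha, rfl⟩
    have hM := (tr _ _).1 hV
    simp only [phiConst, PF.SatR, jcomp_cons] at hM
    simp only [consEnv] at hM
    have h2 := hM α hαM hα
    have h3 := (satR_pmem M htrans 0 2 3
      (consEnv α (consEnv (j κ) (consEnv (j β) (consEnv (j f) fun _ => j ∅))))
      hαM (hjM β) (hjM f)).1 h2
    simp only [consEnv] at h3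
    rw [hfix β hβκ] at h3
    refine ⟨f, {β}, ?_, h3⟩
    rw [hf]
    rw [ZFSet.map_isFunc]
    intro z _
    exact ZFSet.mem_singleton.2 rfl
  · -- main case : `κ ≤ α`
    have hκsubα : κ ⊆ α := by
      rcases ZIsOrd.tri κ hκord α hαord with h | h | h
      · exact fun γ hγ => hαord.1 κ h hγ
      · exact h ▸ fun γ hγ => hγ
      · exact absurd h hcase
    have hMκ : M κ := by
      rcases ZIsOrd.tri κ hκord α hαord with h | h | h
      · exact hMm hαM h
      · exact h ▸ hαM
      · exact absurd h hcase
    have hMβ : M β := by rcases hβ with h | h; exacts [hMm hαM h, h ▸ hαM]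
    classical
    -- T1 : in M there is no surjection from the subsets of some δ < κ onto α+1
    have noSurj : ∀ δ ∈ κ, ∀ S : ZFSet, M S → IsFuncl S →
        (∀ w, M w → (w ∈ α ∨ w = α) → ∃ q, M q ∧ q ⊆ δ ∧ ZFSet.pair q w ∈ S) → False := by
      intro δ hδ S hSM hSfun hSsurj
      have hchoice : ∀ γ, γ ∈ κ → ∃ q, M q ∧ q ⊆ δ ∧ ZFSet.pair q γ ∈ S :=
        fun γ hγ => hSsurj γ (hMm hMκ hγ) (Or.inl (hκsubα hγ))
      let iC : ZFSet → ZFSet := fun γ => if h : γ ∈ κ then (hchoice γ h).choose else ∅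
      have hiCsub : ∀ γ, γ ∈ κ → iC γ ⊆ δ := fun γ h => by
        simp only [iC, dif_pos h]; exact (hchoice γ h).choose_spec.2.1
      have hiCpair : ∀ γ, γ ∈ κ → ZFSet.pair (iC γ) γ ∈ S := fun γ h => by
        simp only [iC, dif_pos h]; exact (hchoice γ h).choose_spec.2.2
      have hiCinj : ∀ γ γ', γ ∈ κ → γ' ∈ κ → iC γ = iC γ' → γ = γ' := by
        intro γ γ' h h' he
        exact hSfun (iC γ) γ γ' (hiCpair γ h) (he ▸ hiCpair γ' h')
      let Y : ZFSet → ZFSet := fun ζ => ZFSet.sep (fun γ => ζ ∈ iC γ) κ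
      let S₁ : ZFSet := ZFSet.map Y δ
      let u : ZFSet := ZFSet.sep (fun ζ => α ∈ j (Y ζ)) δ
      let X : ZFSet := ZFSet.sep (fun γ => iC γ = u) κ
      have hS₁fun : IsFuncl S₁ := by
        intro q w w' h1 h2
        obtain ⟨z, hz, he⟩ := ZFSet.mem_map.1 h1
        obtain ⟨rfl, rfl⟩ := ZFSet.pair_injective he
        obtain ⟨z', hz', he'⟩ := ZFSet.mem_map.1 h2
        obtain ⟨rfl, rfl⟩ := ZFSet.pair_injective he'
        rfl
      have hfunclV : (funclPF 0).Sat (consEnv S₁ fun _ => ∅) := by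
        simp only [funclPF, PF.Sat, consEnv, satV_pmem]
        exact fun q w w' h1 h2 => hS₁fun q w w' h1 h2
      have hjS₁fun := (tr _ _).1 hfunclV
      simp only [funclPF, PF.SatR, jcomp_cons] at hjS₁fun
      have hjS₁fun' : ∀ q w w', M q → M w → M w' →
          ZFSet.pair q w ∈ j S₁ → ZFSet.pair q w' ∈ j S₁ → w = w' := by
        intro q w w' hq hw hw' h1 h2
        exact hjS₁fun q hq w hw w' hw'
          ((satR_pmem M htrans 2 1 3 _ hq hw (hjM S₁)).2 h1)
          ((satR_pmem M htrans 2 0 3 _ hq hw' (hjM S₁)).2 h2)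
      have hpairM : ∀ ζ, ζ ∈ δ → ZFSet.pair ζ (j (Y ζ)) ∈ j S₁ := by
        intro ζ hζ
        have hζκ : ζ ∈ κ := hκord.1 δ hδ hζ
        have hV : (pmem 0 1 2).Sat (consEnv ζ (consEnv (Y ζ) (consEnv S₁ fun _ => ∅))) := by
          rw [satV_pmem]
          exact ZFSet.mem_map.2 ⟨ζ, hζ, rfl⟩
        have hMside := (tr _ _).1 hV
        simp only [jcomp_cons] at hMside
        have hh := (satR_pmem M htrans 0 1 2 _ (hjM ζ) (hjM (Y ζ)) (hjM S₁)).1 hMside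
        rwa [hfix ζ hζκ] at hh
      have hXV : phiX.Sat (consEnv X (consEnv κ (consEnv δ (consEnv S₁ (consEnv u fun _ => ∅))))) := by
        simp only [phiX, PF.Sat, consEnv, satV_pmem, relMap_zf, Matrix.cons_val_zero,
          Matrix.cons_val_one, Matrix.head_cons]
        intro γ
        constructor
        · intro hγX
          obtain ⟨hγκ, hiCu⟩ := ZFSet.mem_sep.1 hγX
          refine ⟨hγκ, ?_⟩
          intro ζ hζ Yv hYv
          obtain ⟨z, hz, he⟩ := ZFSet.mem_map.1 hYv
          obtain ⟨rfl, rfl⟩ := ZFSet.pair_injective he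
          rw [ZFSet.mem_sep, ← hiCu]
          constructor
          · rintro ⟨-, hmem⟩; exact hmem
          · intro hmem; exact ⟨hγκ, hmem⟩
        · rintro ⟨hγκ, hprop⟩
          refine ZFSet.mem_sep.2 ⟨hγκ, ZFSet.ext fun ζ => ?_⟩
          constructor
          · intro hζiC
            have hζδ : ζ ∈ δ := hiCsub γ hγκ hζiC
            have hh := hprop ζ hζδ (Y ζ) (ZFSet.mem_map.2 ⟨ζ, hζδ, rfl⟩)
            exact hh.1 (ZFSet.mem_sep.2 ⟨hγκ, hζiC⟩)
          · intro hζu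
            have hζδ : ζ ∈ δ := (ZFSet.mem_sep.1 hζu).1
            have hh := hprop ζ hζδ (Y ζ) (ZFSet.mem_map.2 ⟨ζ, hζδ, rfl⟩)
            exact (ZFSet.mem_sep.1 (hh.2 hζu)).2
      have hXM := (tr _ _).1 hXV
      simp only [phiX, PF.SatR, jcomp_cons] at hXM
      simp only [consEnv] at hXM
      have hαX : α ∈ j X := by
        refine (hXM α hαM).2 ⟨hα, ?_⟩
        intro ζ hζM hζjδ Yv hYvM hYvp
        have hζδ : ζ ∈ δ := by rwa [hfix δ hδ] at hζjδ
        have hζκ : ζ ∈ κ := hκord.1 δ hδ hζδ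
        have hpair := (satR_pmem M htrans 1 0 6 _ hζM hYvM (hjM S₁)).1 hYvp
        have hYveq : Yv = j (Y ζ) :=
          hjS₁fun' ζ Yv (j (Y ζ)) hζM hYvM (hjM _) hpair (hpairM ζ hζδ)
        rw [hYveq]
        constructor
        · intro hαY
          have hζu : ζ ∈ u := ZFSet.mem_sep.2 ⟨hζδ, hαY⟩
          rw [← hfix ζ hζκ]
          exact memj.1 hζu
        · intro hζju
          have hζu : ζ ∈ u := memj.2 (by rwa [hfix ζ hζκ])
          exact (ZFSet.mem_sep.1 hζu).2
      have hXne : ∃ γ₀, γ₀ ∈ X := by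
        by_contra hcon
        push_neg at hcon
        have hV : phiNotMem.Sat (consEnv X fun _ => ∅) := by
          simp only [phiNotMem, PF.Sat, consEnv, relMap_zf, Matrix.cons_val_zero,
            Matrix.cons_val_one, Matrix.head_cons]
          exact hcon
        have hMn := (tr _ _).1 hV
        simp only [phiNotMem, PF.SatR, jcomp_cons] at hMn
        simp only [consEnv] at hMn
        exact hMn α hαM hαX
      obtain ⟨γ₀, hγ₀X⟩ := hXne
      obtain ⟨hγ₀κ, hγ₀u⟩ := ZFSet.mem_sep.1 hγ₀X
      have hXsingle : ∀ z, z ∈ X ↔ z = γ₀ := by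
        intro z
        constructor
        · intro hz
          obtain ⟨hzκ, hzu⟩ := ZFSet.mem_sep.1 hz
          exact hiCinj z γ₀ hzκ hγ₀κ (hzu.trans hγ₀u.symm)
        · rintro rfl; exact hγ₀X
      have hVs : phiSingle.Sat (consEnv X (consEnv γ₀ fun _ => ∅)) := by
        simp only [phiSingle, PF.Sat, consEnv, relMap_zf, Matrix.cons_val_zero,
          Matrix.cons_val_one, Matrix.head_cons]
        exact hXsingle
      have hMs := (tr _ _).1 hVs
      simp only [phiSingle, PF.SatR, jcomp_cons] at hMs
      simp only [consEnv] at hMs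
      have hαγ₀ : α = j γ₀ := (hMs α hαM).1 hαX
      rw [hfix γ₀ hγ₀κ] at hαγ₀
      exact hcase (hαγ₀ ▸ hγ₀κ)
    -- construct the pointwise least `d` with a surjection-onto-`ξ+1` witness `S`
    have hstep : ∀ ξ : ZFSet, ∃ d S : ZFSet, ξ ∈ κ →
        ZIsOrd d ∧ (∀ d' ∈ d, ¬ SEv d' ξ) ∧ IsFuncl S ∧
          (∀ w, (w ∈ ξ ∨ w = ξ) → ∃ q, q ⊆ d ∧ ZFSet.pair q w ∈ S) := by
      intro ξ
      by_cases hξ : ξ ∈ κ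
      · have hξord : ZIsOrd ξ := hκord.mem hξ
        have hSEξ : SEv ξ ξ := by
          refine ⟨ZFSet.map id (insert ξ ξ), isFuncl_map _ _, ?_⟩
          intro w hw
          refine ⟨w, ?_, ?_⟩
          · rcases hw with h | h
            · exact hξord.1 w h
            · exact h ▸ fun z hz => hz
          · refine ZFSet.mem_map.2 ⟨w, ?_, rfl⟩
            rcases hw with h | h
            · exact ZFSet.mem_insert_iff.2 (Or.inr h)
            · exact h ▸ ZFSet.mem_insert_iff.2 (Or.inl rfl)
        have hξA : ξ ∈ ZFSet.sep (fun d => ZIsOrd d ∧ SEv d ξ) (insert ξ ξ) :=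
          ZFSet.mem_sep.2 ⟨ZFSet.mem_insert_iff.2 (Or.inl rfl), hξord, hSEξ⟩
        have hAne : ZFSet.sep (fun d => ZIsOrd d ∧ SEv d ξ) (insert ξ ξ) ≠ ∅ := fun h => by
          rw [h] at hξA; exact ZFSet.notMem_empty ξ hξA
        obtain ⟨d, hdA, hmin⟩ := ZFSet.regularity _ hAne
        obtain ⟨hdins, hdord, hdSE⟩ := ZFSet.mem_sep.1 hdA
        obtain ⟨S, hSfun, hSsurj⟩ := hdSE
        refine ⟨d, S, fun _ => ⟨hdord, ?_, hSfun, hSsurj⟩⟩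
        intro d' hd' hSE'
        have hd'ins : d' ∈ insert ξ ξ := by
          rcases ZFSet.mem_insert_iff.1 hdins with h | h
          · exact ZFSet.mem_insert_iff.2 (Or.inr (h ▸ hd'))
          · exact ZFSet.mem_insert_iff.2 (Or.inr (hξord.1 d h hd'))
        have hd'A : d' ∈ ZFSet.sep (fun d => ZIsOrd d ∧ SEv d ξ) (insert ξ ξ) :=
          ZFSet.mem_sep.2 ⟨hd'ins, hdord.mem hd', hSE'⟩
        have hbad : d' ∈ ZFSet.sep (fun d => ZIsOrd d ∧ SEv d ξ) (insert ξ ξ) ∩ d :=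
          ZFSet.mem_inter.2 ⟨hd'A, hd'⟩
        rw [hmin] at hbad
        exact ZFSet.notMem_empty d' hbad
      · exact ⟨∅, ∅, fun h => absurd h hξ⟩
    choose dfun Sfun hdS using hstep
    let g : ZFSet := ZFSet.map dfun κ
    let g₃ : ZFSet := ZFSet.map Sfun κ
    -- Θ₁, V-side
    have hΘ₁V : theta1.Sat (consEnv κ (consEnv g (consEnv g₃ fun _ => ∅))) := by
      simp only [theta1, funclPF, ordPF, surjPF, sePF, subPF, PF.Sat, consEnv, satV_pmem,
        relMap_zf, Matrix.cons_val_zero, Matrix.cons_val_one, Matrix.head_cons]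
      refine ⟨fun q w w' h1 h2 => isFuncl_map dfun κ q w w' h1 h2,
        fun q w w' h1 h2 => isFuncl_map Sfun κ q w w' h1 h2, ?_⟩
      intro ξ hξ
      obtain ⟨hdord, hdleast, hSfun, hSsurj⟩ := hdS ξ hξ
      refine ⟨dfun ξ, Sfun ξ, ZFSet.mem_map.2 ⟨ξ, hξ, rfl⟩, ?_, ?_,
        ZFSet.mem_map.2 ⟨ξ, hξ, rfl⟩, fun q w w' h1 h2 => hSfun q w w' h1 h2, ?_⟩
      · intro z hz
        exact ⟨fun c hc => hdord.1 z hz hc, fun a ha b hb => hdord.2 z hz a ha hb⟩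
      · intro d' hd' hcon
        obtain ⟨S', hS'fun, hS'surj⟩ := hcon
        refine hdleast d' hd' ⟨S', fun q w w' h1 h2 => hS'fun q w w' h1 h2, ?_⟩
        intro w hw
        obtain ⟨q, hq1, hq2⟩ := hS'surj w hw
        exact ⟨q, hq1, hq2⟩
      · intro w hw
        obtain ⟨q, hq1, hq2⟩ := hSsurj w hw
        exact ⟨q, hq1, hq2⟩
    -- Θ₁, M-side
    have hΘ₁M := (tr _ _).1 hΘ₁V
    simp only [theta1, funclPF, ordPF, surjPF, sePF, subPF, PF.SatR, jcomp_cons] at hΘ₁M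
    simp only [consEnv] at hΘ₁M
    obtain ⟨hjgfun, hjg₃fun, hbody⟩ := hΘ₁M
    obtain ⟨d₀, hd₀M, S₀, hS₀M, hp1, hp2, hp3, hp4, hp5, hp6⟩ := hbody α hαM hα
    have hpd₀ : ZFSet.pair α d₀ ∈ j g := (satR_pmem M htrans 2 1 4 _ hαM hd₀M (hjM g)).1 hp1
    have hpS₀ : ZFSet.pair α S₀ ∈ j g₃ := (satR_pmem M htrans 2 0 5 _ hαM hS₀M (hjM g₃)).1 hp4
    have hd₀ord : ZIsOrd d₀ := by
      constructor
      · intro z hz c hc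
        exact (hp2 z (hMm hd₀M hz) hz).1 c (hMm (hMm hd₀M hz) hc) hc
      · intro z hz a ha b hb
        exact (hp2 z (hMm hd₀M hz) hz).2 a (hMm (hMm hd₀M hz) ha) ha b
          (hMm (hMm (hMm hd₀M hz) ha) hb) hb
    have hS₀fun : IsFuncl S₀ := by
      intro q w w' h1 h2
      obtain ⟨hqM, hwM⟩ := pairmem_M htrans hS₀M h1
      obtain ⟨-, hw'M⟩ := pairmem_M htrans hS₀M h2
      exact hp5 q hqM w hwM w' hw'M
        ((satR_pmem M htrans 2 1 3 _ hqM hwM hS₀M).2 h1)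
        ((satR_pmem M htrans 2 0 3 _ hqM hw'M hS₀M).2 h2)
    have hS₀surj : ∀ w, M w → (w ∈ α ∨ w = α) →
        ∃ q, M q ∧ q ⊆ d₀ ∧ ZFSet.pair q w ∈ S₀ := by
      intro w hwM hw
      obtain ⟨q, hqM, hqsub, hqp⟩ := hp6 w hwM hw
      refine ⟨q, hqM, fun z hz => hqsub z (hMm hqM hz) hz,
        (satR_pmem M htrans 0 1 2 _ hqM hwM hS₀M).1 hqp⟩
    have hd₀least : ∀ d', M d' → d' ∈ d₀ →
        ¬ (∃ S', M S' ∧ IsFuncl S' ∧ ∀ w, M w → (w ∈ α ∨ w = α) →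
            ∃ q, M q ∧ q ⊆ d' ∧ ZFSet.pair q w ∈ S') := by
      rintro d' hd'M hd' ⟨S', hS'M, hS'fun, hS'surj⟩
      refine hp3 d' hd'M hd' ⟨S', hS'M, ?_, ?_⟩
      · intro q hqM w hwM w' hw'M hqw hqw'
        exact hS'fun q w w'
          ((satR_pmem M htrans 2 1 3 _ hqM hwM hS'M).1 hqw)
          ((satR_pmem M htrans 2 0 3 _ hqM hw'M hS'M).1 hqw')
      · intro w hwM hw
        obtain ⟨q, hqM, hqsub, hqp⟩ := hS'surj w hwM hw
        exact ⟨q, hqM, fun z hzM hz => hqsub hz,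
          (satR_pmem M htrans 0 1 2 _ hqM hwM hS'M).2 hqp⟩
    have hd₀κ : d₀ = κ := by
      rcases ZIsOrd.tri d₀ hd₀ord κ hκord with h | h | h
      · exact absurd (noSurj d₀ h S₀ hS₀M hS₀fun hS₀surj) (fun hh => hh)
      · exact h
      · exfalso
        refine hd₀least κ hMκ h ⟨F, hFM, ?_, ?_⟩
        · intro q w w' h1 h2
          have hq : q ∈ pκ := by
            obtain ⟨a, ha, b, hb, he⟩ := ZFSet.mem_prod.1 (hFfun.1 h1)
            obtain ⟨rfl, rfl⟩ := ZFSet.pair_injective he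
            exact ha
          obtain ⟨v, hv, huniq⟩ := hFfun.2 q hq
          exact (huniq w h1).trans (huniq w' h2).symm
        · intro w hwM hw
          obtain ⟨x, hx, hxp⟩ := hFsurj w (ZFSet.mem_insert_iff.2 hw.symm)
          obtain ⟨hxM, hxsub⟩ := (hpκ x).1 hx
          exact ⟨x, hxM, hxsub, hxp⟩
    obtain ⟨Yw, hYwM, hYwsub, hYwpair⟩ := hS₀surj β hMβ hβ
    have hYsubκ : Yw ⊆ κ := hd₀κ ▸ hYwsub
    -- clean functionality of `j g` and `j g₃`
    have hjgfun' : ∀ q w w', M q → M w → M w' →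
        ZFSet.pair q w ∈ j g → ZFSet.pair q w' ∈ j g → w = w' := by
      intro q w w' hq hw hw' h1 h2
      exact hjgfun q hq w hw w' hw'
        ((satR_pmem M htrans 2 1 4 _ hq hw (hjM g)).2 h1)
        ((satR_pmem M htrans 2 0 4 _ hq hw' (hjM g)).2 h2)
    have hjg₃fun' : ∀ q w w', M q → M w → M w' →
        ZFSet.pair q w ∈ j g₃ → ZFSet.pair q w' ∈ j g₃ → w = w' := by
      intro q w w' hq hw hw' h1 h2
      exact hjg₃fun q hq w hw w' hw'
        ((satR_pmem M htrans 2 1 5 _ hq hw (hjM g₃)).2 h1)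
        ((satR_pmem M htrans 2 0 5 _ hq hw' (hjM g₃)).2 h2)
    -- Θ₂
    let Fy : ZFSet := ZFSet.map (fun ξ => Yw ∩ dfun ξ) κ
    let bfun : ZFSet → ZFSet := fun ξ =>
      if h : ∃! w, ZFSet.pair (Yw ∩ dfun ξ) w ∈ Sfun ξ then h.exists.choose else ∅
    let B : ZFSet := ZFSet.map bfun κ
    have hΘ₂V : theta2.Sat (consEnv κ (consEnv g (consEnv g₃
        (consEnv Fy (consEnv B (consEnv Yw fun _ => ∅)))))) := by
      simp only [theta2, PF.Sat, consEnv, satV_pmem, relMap_zf, Matrix.cons_val_zero,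
        Matrix.cons_val_one, Matrix.head_cons]
      intro ξ hξ
      refine ⟨dfun ξ, Sfun ξ, Yw ∩ dfun ξ, bfun ξ, ZFSet.mem_map.2 ⟨ξ, hξ, rfl⟩,
        ZFSet.mem_map.2 ⟨ξ, hξ, rfl⟩, ZFSet.mem_map.2 ⟨ξ, hξ, rfl⟩,
        fun z => ZFSet.mem_inter, ZFSet.mem_map.2 ⟨ξ, hξ, rfl⟩, ?_⟩
      intro hyp
      have hyp' : ∃! w, ZFSet.pair (Yw ∩ dfun ξ) w ∈ Sfun ξ := hyp
      simp only [bfun]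
      rw [dif_pos hyp']
      exact hyp'.exists.choose_spec
    have hΘ₂M := (tr _ _).1 hΘ₂V
    simp only [theta2, PF.SatR, jcomp_cons] at hΘ₂M
    simp only [consEnv] at hΘ₂M
    obtain ⟨d', hd'M, S', hS'M, y', hy'M, w', hw'M, hq1, hq2, hq3, hq4, hq5, hq6⟩ :=
      hΘ₂M α hαM hα
    have hpd' : ZFSet.pair α d' ∈ j g := (satR_pmem M htrans 4 3 6 _ hαM hd'M (hjM g)).1 hq1
    have hd'eq : d' = d₀ := hjgfun' α d' d₀ hαM hd'M hd₀M hpd' hpd₀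
    have hpS' : ZFSet.pair α S' ∈ j g₃ := (satR_pmem M htrans 4 2 7 _ hαM hS'M (hjM g₃)).1 hq2
    have hS'eq : S' = S₀ := hjg₃fun' α S' S₀ hαM hS'M hS₀M hpS' hpS₀
    have hy'eq : y' = Yw := by
      apply ZFSet.ext; intro z
      constructor
      · intro hz
        have hzM : M z := hMm hy'M hz
        have h4 := (hq4 z hzM).1 hz
        have hzκ : z ∈ κ := by
          have := h4.2; rwa [hd'eq, hd₀κ] at this
        have hjz := h4.1
        rw [← hfix z hzκ] at hjz
        exact memj.2 hjz
      · intro hz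
        have hzκ : z ∈ κ := hYsubκ hz
        have hzM : M z := hMm hMκ hzκ
        refine (hq4 z hzM).2 ⟨?_, ?_⟩
        · rw [← hfix z hzκ]; exact memj.1 hz
        · rw [hd'eq, hd₀κ]; exact hzκ
    have hpw' : ZFSet.pair α w' ∈ j B := (satR_pmem M htrans 4 0 9 _ hαM hw'M (hjM B)).1 hq5
    have hq6' := hq6 ⟨β, hMβ,
      (satR_pmem M htrans 2 0 3 _ hy'M hMβ hS'M).2
        (by rw [hy'eq, hS'eq]; exact hYwpair),
      fun w₂ hw₂M hw₂p => by
        have hpw₂ := (satR_pmem M htrans 3 0 4 _ hy'M hw₂M hS'M).1 hw₂p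
        rw [hy'eq, hS'eq] at hpw₂
        exact hS₀fun Yw w₂ β hpw₂ hYwpair⟩
    have hfinal : ZFSet.pair y' w' ∈ S' := (satR_pmem M htrans 1 0 2 _ hy'M hw'M hS'M).1 hq6'
    rw [hy'eq, hS'eq] at hfinal
    have hw'β : w' = β := hS₀fun Yw w' β hfinal hYwpair
    rw [hw'β] at hpw'
    refine ⟨B, ZFSet.image bfun κ, ?_, hpw'⟩
    rw [show B = ZFSet.map bfun κ from rfl, ZFSet.map_isFunc]
    intro z hz
    exact ZFSet.mem_image.2 ⟨z, hz, rfl⟩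

end PaperFormal
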